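/- Weighted cross-term summation bound: let λ ∈ (0,1), let (g_t) and (e_t) be nonnegative sequences with (e_t) non-increasing and summable with sum S_e, and let α > 0. Then Σ_{t=0}^{k−1} g_t · (Σ_{s=0}^{t−1} λ^s e_{t−1−s}) ≤ (α/2) Σ_{t=0}^{k−1} g_t² + e_0 S_e / (2α(1−λ)²). -/

import Mathlib

/-- weighted cross-term summation bound. -/
theorem stmt19 (lam : ℝ) (hlam : lam ∈ Set.Ioo (0:ℝ) 1) (α : ℝ) (hα : 0 < α)
    (g e : ℕ → ℝ) (hg : ∀ t, 0 ≤ g t) (he : ∀ t, 0 ≤ e t)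
    (hmono : ∀ t, e (t+1) ≤ e t) (hsum : Summable e)
    (Se : ℝ) (hSe : Se = ∑' t, e t) (k : ℕ) :
    ∑ t ∈ Finset.range k, g t * (∑ s ∈ Finset.range t, lam^s * e (t-1-s)) ≤
      α/2 * ∑ t ∈ Finset.range k, (g t)^2 + e 0 * Se / (2*α*(1-lam)^2) := by
  obtain ⟨hl0, hl1⟩ := hlam
  set S : ℕ → ℝ := fun t => ∑ s ∈ Finset.range t, lam^s * e (t-1-s) with hSdef
  have hSnn : ∀ t, 0 ≤ S t := fun t =>
    Finset.sum_nonneg fun s _ => mul_nonneg (pow_nonneg hl0.le _) (he _)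
  have he0 : ∀ n, e n ≤ e 0 := by
    intro n
    induction n with
    | zero => exact le_rfl
    | succ n ih => exact (hmono n).trans ih
  have hSe0 : 0 ≤ Se := by
    rw [hSe]; exact tsum_nonneg he
  have hpart : ∀ m, ∑ t ∈ Finset.range m, e t ≤ Se := by
    intro m
    rw [hSe]
    exact Summable.sum_le_tsum _ (fun i _ => he i) hsum
  -- recurrence S (t+1) = e t + lam * S t
  have hrec : ∀ t, S (t+1) = e t + lam * S t := by
    intro t
    rw [hSdef]
    simp only
    rw [Finset.sum_range_succ']
    simp only [pow_zero, one_mul, Nat.add_sub_cancel, Nat.sub_zero]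
    rw [add_comm, Finset.mul_sum]
    congr 1
    apply Finset.sum_congr rfl
    intro s _
    have h : t - (s+1) = t - 1 - s := by omega
    rw [h, pow_succ]
    ring
  -- cumulative bound : (1 - lam) * ∑ S ≤ Se
  have hcum : ∀ m, (1 - lam) * ∑ t ∈ Finset.range m, S t ≤ Se := by
    intro m
    cases m with
    | zero => simpa using hSe0
    | succ n =>
      have h1 : ∑ t ∈ Finset.range (n+1), S t
          = ∑ t ∈ Finset.range n, e t + lam * ∑ t ∈ Finset.range n, S t := by
        rw [Finset.sum_range_succ']
        have hS0 : S 0 = 0 := by simp [hSdef]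
        simp only [hS0, add_zero]
        rw [Finset.mul_sum, ← Finset.sum_add_distrib]
        exact Finset.sum_congr rfl fun t _ => hrec t
      have h2 : ∑ t ∈ Finset.range (n+1), S t
          = ∑ t ∈ Finset.range n, S t + S n := Finset.sum_range_succ S n
      have h3 := hpart n
      have h4 := hSnn n
      nlinarith
  have hSS : ∑ t ∈ Finset.range k, S t ≤ Se / (1 - lam) := by
    rw [le_div_iff₀ (by linarith)]
    linarith [hcum k]
  -- pointwise bound S t ≤ e 0 / (1 - lam)
  have hSbd : ∀ t, S t ≤ e 0 / (1 - lam) := by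
    intro t
    have h1 : S t ≤ ∑ s ∈ Finset.range t, lam^s * e 0 :=
      Finset.sum_le_sum fun s _ =>
        mul_le_mul_of_nonneg_left (he0 _) (pow_nonneg hl0.le _)
    have hgeom : ∑ s ∈ Finset.range t, lam^s ≤ 1 / (1 - lam) := by
      have hd : (0:ℝ) < 1 - lam := by linarith
      rw [geom_sum_eq (ne_of_lt hl1)]
      have heq : (lam ^ t - 1)/(lam - 1) = (1 - lam ^ t)/(1 - lam) := by
        rw [div_eq_div_iff (by linarith) (by linarith)]; ring
      rw [heq, div_le_div_iff₀ hd hd]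
      nlinarith [pow_nonneg hl0.le t]
    calc S t ≤ ∑ s ∈ Finset.range t, lam^s * e 0 := h1
      _ = (∑ s ∈ Finset.range t, lam^s) * e 0 := by rw [Finset.sum_mul]
      _ ≤ (1 / (1 - lam)) * e 0 :=
          mul_le_mul_of_nonneg_right hgeom (he 0)
      _ = e 0 / (1 - lam) := by ring
  -- sum of squares bound
  have hSq : ∑ t ∈ Finset.range k, (S t)^2 ≤ e 0 * Se / (1 - lam)^2 := by
    have h1 : ∑ t ∈ Finset.range k, (S t)^2
        ≤ ∑ t ∈ Finset.range k, (e 0 / (1 - lam)) * S t := by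
      apply Finset.sum_le_sum
      intro t _
      have := hSbd t
      have := hSnn t
      nlinarith
    rw [← Finset.mul_sum] at h1
    have he0nn := he 0
    have hden : (0:ℝ) < 1 - lam := by linarith
    calc ∑ t ∈ Finset.range k, (S t)^2
        ≤ (e 0 / (1 - lam)) * ∑ t ∈ Finset.range k, S t := h1
      _ ≤ (e 0 / (1 - lam)) * (Se / (1 - lam)) :=
          mul_le_mul_of_nonneg_left hSS (by positivity)
      _ = e 0 * Se / (1 - lam)^2 := by
          rw [div_mul_div_comm]; congr 1; ring
  -- Young's inequality pointwise and conclusion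
  have hyoung : ∑ t ∈ Finset.range k, g t * S t
      ≤ α/2 * ∑ t ∈ Finset.range k, (g t)^2
        + 1/(2*α) * ∑ t ∈ Finset.range k, (S t)^2 := by
    rw [Finset.mul_sum, Finset.mul_sum, ← Finset.sum_add_distrib]
    apply Finset.sum_le_sum
    intro t _
    have h : 2 * α * (g t * S t) ≤ 2 * α * (α/2 * (g t)^2 + 1/(2*α) * (S t)^2) := by
      have hexp : 2 * α * (α/2 * (g t)^2 + 1/(2*α) * (S t)^2)
          = α^2 * (g t)^2 + (S t)^2 := by
        field_simp
      rw [hexp]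
      nlinarith [sq_nonneg (α * g t - S t)]
    exact le_of_mul_le_mul_left h (by positivity)
  have hfin : 1/(2*α) * ∑ t ∈ Finset.range k, (S t)^2 ≤ e 0 * Se / (2*α*(1-lam)^2) := by
    have h := mul_le_mul_of_nonneg_left hSq (by positivity : (0:ℝ) ≤ 1/(2*α))
    calc 1/(2*α) * ∑ t ∈ Finset.range k, (S t)^2
        ≤ 1/(2*α) * (e 0 * Se / (1-lam)^2) := h
      _ = e 0 * Se / (2*α*(1-lam)^2) := by
          rw [div_mul_div_comm, one_mul]
  linarith [hyoung, hfin]
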